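/- Let J be a finite set with |J| ≥ 2m, let S ⊆ J, and consider a uniformly random choice of a matching consisting of m pairwise disjoint edges with all endpoints in J. If |J| - 2m > |J|/2, then for every integer t, the probability that at least t elements of S are endpoints of the matching is at most ∑_{s ≥ t} C(2m, s) · (2|S|/|J|)^s. -/

import Mathlib

open Finset

set_option linter.unusedSectionVars false

namespace Stmt1Aux

variable {V : Type*} [Fintype V] [DecidableEq V]

def isM (J : Finset V) (m : ℕ) (ℳ : Finset (Finset V)) : Prop :=
  ℳ.card = m ∧ (∀ e ∈ ℳ, e.card = 2 ∧ e ⊆ J) ∧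
    ∀ e ∈ ℳ, ∀ f ∈ ℳ, e ≠ f → Disjoint e f

instance (J : Finset V) (m : ℕ) : DecidablePred (isM J m) := fun _ => by
  unfold isM; infer_instance

lemma cov_card {J : Finset V} {m : ℕ} {ℳ : Finset (Finset V)} (h : isM J m ℳ) :
    (ℳ.biUnion id).card = 2 * m := by
  have hb := card_biUnion (s := ℳ) (t := id) (fun x hx y hy hxy => h.2.2 x hx y hy hxy)
  have hs : ∑ u ∈ ℳ, (id u).card = ∑ _u ∈ ℳ, 2 :=
    Finset.sum_congr rfl (fun e he => (h.2.1 e he).1)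
  rw [hb, hs, Finset.sum_const, h.1, smul_eq_mul]
  omega

lemma cov_subset {J : Finset V} {m : ℕ} {ℳ : Finset (Finset V)} (h : isM J m ℳ) :
    ℳ.biUnion id ⊆ J :=
  biUnion_subset.mpr (fun e he => (h.2.1 e he).2)

def swap (a u : V) (ℳ : Finset (Finset V)) : Finset (Finset V) :=
  ℳ.image (fun e => if a ∈ e then insert u (e.erase a) else e)

lemma swap_spec {J : Finset V} {m : ℕ} {ℳ : Finset (Finset V)} {A : Finset V} {a u : V}
    (hM : isM J m ℳ) (hA : insert a A ⊆ ℳ.biUnion id) (ha : a ∉ A)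
    (huJ : u ∈ J) (hu : u ∉ ℳ.biUnion id) :
    isM J m (swap a u ℳ) ∧ A ⊆ (swap a u ℳ).biUnion id ∧
      u ∈ (swap a u ℳ).biUnion id ∧ u ∉ A ∧ swap u a (swap a u ℳ) = ℳ := by
  have hu' : ∀ e ∈ ℳ, u ∉ e := fun e he hue => hu (mem_biUnion.2 ⟨e, he, hue⟩)
  have haC : a ∈ ℳ.biUnion id := hA (mem_insert_self a A)
  obtain ⟨e₀, he₀, hae₀⟩ := mem_biUnion.1 haC
  set g : Finset V → Finset V := fun e => if a ∈ e then insert u (e.erase a) else e with hg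
  have hinj : ∀ e₁ ∈ ℳ, ∀ e₂ ∈ ℳ, g e₁ = g e₂ → e₁ = e₂ := by
    intro e₁ h1 e₂ h2 heq
    by_cases ha1 : a ∈ e₁ <;> by_cases ha2 : a ∈ e₂
    · by_contra hne
      exact (Finset.disjoint_left.1 (hM.2.2 _ h1 _ h2 hne) ha1) ha2
    · simp only [hg, if_pos ha1, if_neg ha2] at heq
      exact absurd (heq ▸ mem_insert_self u _) (hu' e₂ h2)
    · simp only [hg, if_pos ha2, if_neg ha1] at heq
      exact absurd (heq ▸ mem_insert_self u _) (hu' e₁ h1)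
    · simpa [hg, if_neg ha1, if_neg ha2] using heq
  have hM' : isM J m (swap a u ℳ) := by
    refine ⟨?_, ?_, ?_⟩
    · rw [swap, card_image_of_injOn hinj, hM.1]
    · intro f hf
      obtain ⟨e, he, rfl⟩ := mem_image.1 hf
      by_cases hae : a ∈ e
      · have hune : u ∉ e.erase a := fun h => hu' e he (mem_of_mem_erase h)
        constructor
        · rw [if_pos hae, card_insert_of_notMem hune, card_erase_of_mem hae, (hM.2.1 e he).1]
        · rw [if_pos hae]
          exact insert_subset huJ ((erase_subset a e).trans (hM.2.1 e he).2)
      · simpa [hg, if_neg hae] using hM.2.1 e he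
    · intro f₁ hf₁ f₂ hf₂ hne
      obtain ⟨e₁, he₁, rfl⟩ := mem_image.1 hf₁
      obtain ⟨e₂, he₂, rfl⟩ := mem_image.1 hf₂
      have hee : e₁ ≠ e₂ := fun h => hne (by rw [h])
      have hd : Disjoint e₁ e₂ := hM.2.2 _ he₁ _ he₂ hee
      by_cases ha1 : a ∈ e₁ <;> by_cases ha2 : a ∈ e₂
      · exact absurd ha2 (Finset.disjoint_left.1 hd ha1)
      · simp only [hg, if_pos ha1, if_neg ha2]
        rw [Finset.disjoint_insert_left]
        exact ⟨hu' e₂ he₂, disjoint_of_subset_left (erase_subset a e₁) hd⟩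
      · simp only [hg, if_pos ha2, if_neg ha1]
        rw [Finset.disjoint_insert_right]
        exact ⟨hu' e₁ he₁, disjoint_of_subset_right (erase_subset a e₂) hd⟩
      · simpa [hg, if_neg ha1, if_neg ha2] using hd
  have hAsub : A ⊆ (swap a u ℳ).biUnion id := by
    intro x hx
    obtain ⟨e, he, hxe⟩ := mem_biUnion.1 (hA (mem_insert_of_mem hx))
    refine mem_biUnion.2 ⟨g e, mem_image_of_mem g he, ?_⟩
    by_cases hae : a ∈ e
    · simp only [hg, if_pos hae, id]
      exact mem_insert_of_mem (mem_erase.2 ⟨fun h => ha (h ▸ hx), hxe⟩)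
    · simpa [hg, if_neg hae] using hxe
  have huC : u ∈ (swap a u ℳ).biUnion id :=
    mem_biUnion.2 ⟨g e₀, mem_image_of_mem g he₀, by
      have : a ∈ e₀ := hae₀
      rw [hg]; simp only [if_pos this]; exact mem_insert_self u _⟩
  have huA : u ∉ A := fun h => hu (hA (mem_insert_of_mem h))
  refine ⟨hM', hAsub, huC, huA, ?_⟩
  rw [swap, swap, image_image]
  have : ∀ e ∈ ℳ, ((fun e => if u ∈ e then insert a (e.erase u) else e) ∘ g) e = e := by
    intro e he
    by_cases hae : a ∈ e
    · have hune : u ∉ e.erase a := fun h => hu' e he (mem_of_mem_erase h)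
      simp only [Function.comp, hg, if_pos hae, if_pos (mem_insert_self u _)]
      rw [Finset.erase_insert hune, insert_erase hae]
    · simp only [Function.comp, hg, if_neg hae, if_neg (hu' e he)]
  rw [Finset.image_congr fun e he => this e he]
  simp

lemma key (J : Finset V) (m : ℕ) (A : Finset V) (a : V) (ha : a ∉ A) :
    (univ.filter (fun ℳ : Finset (Finset V) => isM J m ℳ ∧ insert a A ⊆ ℳ.biUnion id)).card
      * (J.card - 2 * m)
    ≤ (2 * m - A.card) *
      (univ.filter (fun ℳ : Finset (Finset V) => isM J m ℳ ∧ A ⊆ ℳ.biUnion id)).card := by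
  classical
  set D1 := univ.filter
    (fun ℳ : Finset (Finset V) => isM J m ℳ ∧ insert a A ⊆ ℳ.biUnion id) with hD1
  set C1 := univ.filter
    (fun ℳ : Finset (Finset V) => isM J m ℳ ∧ A ⊆ ℳ.biUnion id) with hC1
  set D := D1.biUnion (fun ℳ => (J \ ℳ.biUnion id).image (fun u => (ℳ, u))) with hD
  set C := C1.biUnion (fun ℳ => ((ℳ.biUnion id) \ A).image (fun u => (ℳ, u))) with hC
  have memD : ∀ p : Finset (Finset V) × V, p ∈ D ↔
      (isM J m p.1 ∧ insert a A ⊆ p.1.biUnion id) ∧ p.2 ∈ J ∧ p.2 ∉ p.1.biUnion id := by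
    intro p
    simp only [hD, mem_biUnion, mem_image, hD1, mem_filter, mem_univ, true_and, mem_sdiff]
    constructor
    · rintro ⟨ℳ, hℳ, u, hu, rfl⟩; exact ⟨hℳ, hu⟩
    · rintro ⟨h1, h2⟩; exact ⟨p.1, h1, p.2, h2, rfl⟩
  have memC : ∀ p : Finset (Finset V) × V, p ∈ C ↔
      (isM J m p.1 ∧ A ⊆ p.1.biUnion id) ∧ p.2 ∈ p.1.biUnion id ∧ p.2 ∉ A := by
    intro p
    simp only [hC, mem_biUnion, mem_image, hC1, mem_filter, mem_univ, true_and, mem_sdiff]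
    constructor
    · rintro ⟨ℳ, hℳ, u, hu, rfl⟩; exact ⟨hℳ, hu⟩
    · rintro ⟨h1, h2⟩; exact ⟨p.1, h1, p.2, h2, rfl⟩
  have hDcard : D.card = D1.card * (J.card - 2 * m) := by
    rw [hD, card_biUnion]
    · have hper : ∀ ℳ ∈ D1,
          ((J \ ℳ.biUnion id).image (fun u => (ℳ, u))).card = J.card - 2 * m := by
        intro ℳ hℳ
        rw [hD1, mem_filter] at hℳ
        rw [card_image_of_injective _ (fun x y h => by simpa using h),
          card_sdiff_of_subset (cov_subset hℳ.2.1), cov_card hℳ.2.1]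
      rw [Finset.sum_congr rfl hper, Finset.sum_const, smul_eq_mul]
    · intro ℳ₁ h1 ℳ₂ h2 hne
      rw [Function.onFun, Finset.disjoint_left]
      rintro p hp1 hp2
      obtain ⟨u, _, rfl⟩ := mem_image.1 hp1
      obtain ⟨u', _, h⟩ := mem_image.1 hp2
      exact hne (congrArg Prod.fst h).symm
  have hCcard : C.card = C1.card * (2 * m - A.card) := by
    rw [hC, card_biUnion]
    · have hper : ∀ ℳ ∈ C1,
          (((ℳ.biUnion id) \ A).image (fun u => (ℳ, u))).card = 2 * m - A.card := by
        intro ℳ hℳ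
        rw [hC1, mem_filter] at hℳ
        rw [card_image_of_injective _ (fun x y h => by simpa using h),
          card_sdiff_of_subset hℳ.2.2, cov_card hℳ.2.1]
      rw [Finset.sum_congr rfl hper, Finset.sum_const, smul_eq_mul]
    · intro ℳ₁ h1 ℳ₂ h2 hne
      rw [Function.onFun, Finset.disjoint_left]
      rintro p hp1 hp2
      obtain ⟨u, _, rfl⟩ := mem_image.1 hp1
      obtain ⟨u', _, h⟩ := mem_image.1 hp2
      exact hne (congrArg Prod.fst h).symm
  have hcard : D.card ≤ C.card := by
    apply card_le_card_of_injOn (fun p => (swap a p.2 p.1, p.2))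
    · intro p hp
      rw [Finset.mem_coe, memD] at hp
      obtain ⟨⟨hM, hA⟩, huJ, hu⟩ := hp
      obtain ⟨hM', hAsub, huC, huA, _⟩ := swap_spec hM hA ha huJ hu
      rw [Finset.mem_coe, memC]
      exact ⟨⟨hM', hAsub⟩, huC, huA⟩
    · intro p hp q hq heq
      rw [Finset.mem_coe, memD] at hp hq
      obtain ⟨⟨hMp, hAp⟩, hpJ, hpu⟩ := hp
      obtain ⟨⟨hMq, hAq⟩, hqJ, hqu⟩ := hq
      simp only [Prod.mk.injEq] at heq
      obtain ⟨h1, h2⟩ := heq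
      have e1 := (swap_spec hMp hAp ha hpJ hpu).2.2.2.2
      have e2 := (swap_spec hMq hAq ha hqJ hqu).2.2.2.2
      have h0 : p.1 = q.1 := by rw [← e1, ← e2, h1, h2]
      exact Prod.ext h0 h2
  calc D1.card * (J.card - 2 * m) = D.card := hDcard.symm
    _ ≤ C.card := hcard
    _ = (2 * m - A.card) * C1.card := by rw [hCcard, mul_comm]

def covM (J : Finset V) (m : ℕ) (A : Finset V) : Finset (Finset (Finset V)) :=
  univ.filter (fun ℳ => isM J m ℳ ∧ A ⊆ ℳ.biUnion id)

lemma cov_bound (J : Finset V) (m : ℕ) (A : Finset V) :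
    (covM J m A).card * (J.card - 2 * m) ^ A.card
      ≤ (2 * m).descFactorial A.card *
        (univ.filter (fun ℳ : Finset (Finset V) => isM J m ℳ)).card := by
  induction A using Finset.induction_on with
  | empty =>
      simp [covM]
  | @insert a A ha ih =>
      rw [card_insert_of_notMem ha, pow_succ, Nat.descFactorial_succ]
      calc (covM J m (insert a A)).card * ((J.card - 2 * m) ^ A.card * (J.card - 2 * m))
          = ((covM J m (insert a A)).card * (J.card - 2 * m)) * (J.card - 2 * m) ^ A.card := by
            ring
        _ ≤ ((2 * m - A.card) * (covM J m A).card) * (J.card - 2 * m) ^ A.card :=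
            mul_le_mul_left (key J m A a ha) _
        _ = (2 * m - A.card) * ((covM J m A).card * (J.card - 2 * m) ^ A.card) := by ring
        _ ≤ (2 * m - A.card) * ((2 * m).descFactorial A.card *
              (univ.filter (fun ℳ : Finset (Finset V) => isM J m ℳ)).card) :=
            mul_le_mul_right ih _
        _ = (2 * m - A.card) * (2 * m).descFactorial A.card *
              (univ.filter (fun ℳ : Finset (Finset V) => isM J m ℳ)).card := by ring

end Stmt1Aux

open Stmt1Aux

/-- For a uniformly random matching of `m` disjoint edges with endpoints in `J`,
if `|J| - 2m > |J|/2` then the probability that at least `t` elements of `S ⊆ J`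
are covered is at most `∑_{s ≥ t} C(2m, s) (2|S|/|J|)^s`. -/
theorem stmt1 {V : Type*} [Fintype V] [DecidableEq V]
    (J S : Finset V) (hSJ : S ⊆ J) (m t : ℕ)
    (h2m : 2 * m ≤ J.card)
    (hhalf : (J.card : ℝ) - 2 * m > (J.card : ℝ) / 2) :
    ((univ.filter (fun ℳ : Finset (Finset V) =>
        (ℳ.card = m ∧ (∀ e ∈ ℳ, e.card = 2 ∧ e ⊆ J) ∧
          ∀ e ∈ ℳ, ∀ f ∈ ℳ, e ≠ f → Disjoint e f) ∧
        t ≤ (S.filter (fun x => ∃ e ∈ ℳ, x ∈ e)).card)).card : ℝ) /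
      ((univ.filter (fun ℳ : Finset (Finset V) =>
        ℳ.card = m ∧ (∀ e ∈ ℳ, e.card = 2 ∧ e ⊆ J) ∧
          ∀ e ∈ ℳ, ∀ f ∈ ℳ, e ≠ f → Disjoint e f)).card : ℝ) ≤
      ∑ s ∈ Finset.Icc t (2 * m),
        ((2 * m).choose s : ℝ) * (2 * S.card / J.card : ℝ) ^ s := by
  classical
  have hden_eq : (univ.filter (fun ℳ : Finset (Finset V) =>
        ℳ.card = m ∧ (∀ e ∈ ℳ, e.card = 2 ∧ e ⊆ J) ∧
          ∀ e ∈ ℳ, ∀ f ∈ ℳ, e ≠ f → Disjoint e f))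
      = univ.filter (fun ℳ : Finset (Finset V) => isM J m ℳ) := by
    ext ℳ; rw [mem_filter, mem_filter]; simp [isM]
  have hnum_eq : (univ.filter (fun ℳ : Finset (Finset V) =>
        (ℳ.card = m ∧ (∀ e ∈ ℳ, e.card = 2 ∧ e ⊆ J) ∧
          ∀ e ∈ ℳ, ∀ f ∈ ℳ, e ≠ f → Disjoint e f) ∧
        t ≤ (S.filter (fun x => ∃ e ∈ ℳ, x ∈ e)).card))
      = univ.filter (fun ℳ : Finset (Finset V) => isM J m ℳ ∧
          t ≤ (S.filter (fun x => ∃ e ∈ ℳ, x ∈ e)).card) := by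
    ext ℳ; rw [mem_filter, mem_filter]; simp [isM]
  rw [hnum_eq, hden_eq]
  set N := (univ.filter (fun ℳ : Finset (Finset V) => isM J m ℳ)).card with hN
  set Num := (univ.filter (fun ℳ : Finset (Finset V) => isM J m ℳ ∧
      t ≤ (S.filter (fun x => ∃ e ∈ ℳ, x ∈ e)).card)).card with hNum
  set K := J.card - 2 * m with hKdef
  -- union bound, in ℕ
  have hsub : (univ.filter (fun ℳ : Finset (Finset V) => isM J m ℳ ∧
      t ≤ (S.filter (fun x => ∃ e ∈ ℳ, x ∈ e)).card))
      ⊆ (S.powersetCard t).biUnion (fun A => covM J m A) := by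
    intro ℳ hℳ
    rw [mem_filter] at hℳ
    obtain ⟨-, hM, ht⟩ := hℳ
    obtain ⟨A, hAsub, hAcard⟩ := Finset.exists_subset_card_eq ht
    refine mem_biUnion.2 ⟨A, mem_powersetCard.2 ⟨hAsub.trans (filter_subset _ _), hAcard⟩,
      mem_filter.2 ⟨mem_univ _, hM, ?_⟩⟩
    intro x hx
    obtain ⟨-, e, he, hxe⟩ := mem_filter.1 (hAsub hx)
    exact mem_biUnion.2 ⟨e, he, hxe⟩
  have hchoose : S.card.choose t * (2 * m).descFactorial t ≤ (2 * m).choose t * S.card ^ t := by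
    rw [Nat.descFactorial_eq_factorial_mul_choose]
    calc S.card.choose t * (t.factorial * (2 * m).choose t)
        = (t.factorial * S.card.choose t) * (2 * m).choose t := by ring
      _ = S.card.descFactorial t * (2 * m).choose t := by
          rw [← Nat.descFactorial_eq_factorial_mul_choose]
      _ ≤ S.card ^ t * (2 * m).choose t :=
          mul_le_mul_left (Nat.descFactorial_le_pow _ _) _
      _ = (2 * m).choose t * S.card ^ t := mul_comm _ _
  have hnat : Num * K ^ t ≤ (2 * m).choose t * S.card ^ t * N := by
    calc Num * K ^ t
        ≤ ((S.powersetCard t).biUnion (fun A => covM J m A)).card * K ^ t :=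
          mul_le_mul_left (card_le_card hsub) _
      _ ≤ (∑ A ∈ S.powersetCard t, (covM J m A).card) * K ^ t :=
          mul_le_mul_left card_biUnion_le _
      _ = ∑ A ∈ S.powersetCard t, (covM J m A).card * K ^ t := by rw [Finset.sum_mul]
      _ ≤ ∑ _A ∈ S.powersetCard t, (2 * m).descFactorial t * N := by
          apply Finset.sum_le_sum
          intro A hA
          have hAc : A.card = t := (mem_powersetCard.1 hA).2
          rw [← hAc]
          exact cov_bound J m A
      _ = S.card.choose t * ((2 * m).descFactorial t * N) := by
          rw [Finset.sum_const, card_powersetCard, smul_eq_mul]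
      _ = (S.card.choose t * (2 * m).descFactorial t) * N := by ring
      _ ≤ ((2 * m).choose t * S.card ^ t) * N := mul_le_mul_left hchoose _
  -- real arithmetic
  have hm0 : (0:ℝ) ≤ 2 * m := by positivity
  have hJpos : 0 < (J.card : ℝ) := by
    have h1 : (J.card : ℝ) - 2 * m ≤ J.card := by linarith
    linarith
  have hKcast : (K : ℝ) = (J.card : ℝ) - 2 * m := by
    rw [hKdef, Nat.cast_sub h2m]; push_cast; ring
  have hKpos : 0 < (K : ℝ) := by rw [hKcast]; linarith
  have hfrac : (S.card : ℝ) / K ≤ 2 * S.card / J.card := by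
    rw [div_le_div_iff₀ hKpos hJpos]
    have hS0 : (0:ℝ) ≤ S.card := Nat.cast_nonneg _
    nlinarith [hKcast, hhalf]
  have hreal : (Num : ℝ) ≤ ((2 * m).choose t : ℝ) * (2 * S.card / J.card : ℝ) ^ t * N := by
    have h1 : (Num : ℝ) * K ^ t ≤ ((2 * m).choose t : ℝ) * (S.card : ℝ) ^ t * N := by
      exact_mod_cast hnat
    have h2 : (Num : ℝ) ≤ ((2 * m).choose t : ℝ) * ((S.card : ℝ) / K) ^ t * N := by
      have heq : ((2 * m).choose t : ℝ) * ((S.card : ℝ) / K) ^ t * N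
          = (((2 * m).choose t : ℝ) * (S.card : ℝ) ^ t * N) / K ^ t := by
        rw [div_pow]; field_simp
      rw [heq, le_div_iff₀ (pow_pos hKpos t)]
      exact h1
    refine h2.trans ?_
    have hp : ((S.card : ℝ) / K) ^ t ≤ (2 * S.card / J.card : ℝ) ^ t :=
      pow_le_pow_left₀ (by positivity) hfrac t
    exact mul_le_mul_of_nonneg_right
      (mul_le_mul_of_nonneg_left hp (Nat.cast_nonneg _)) (Nat.cast_nonneg _)
  have hsum_nonneg : (0:ℝ) ≤ ∑ s ∈ Finset.Icc t (2 * m),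
      ((2 * m).choose s : ℝ) * (2 * S.card / J.card : ℝ) ^ s := by
    apply Finset.sum_nonneg
    intro i _
    positivity
  rcases Nat.eq_zero_or_pos N with hN0 | hNpos
  · have hNum0 : Num = 0 := by
      have hsub2 : (univ.filter (fun ℳ : Finset (Finset V) => isM J m ℳ ∧
          t ≤ (S.filter (fun x => ∃ e ∈ ℳ, x ∈ e)).card))
          ⊆ univ.filter (fun ℳ : Finset (Finset V) => isM J m ℳ) := by
        intro ℳ h
        exact mem_filter.2 ⟨mem_univ _, (mem_filter.1 h).2.1⟩
      have := card_le_card hsub2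
      omega
    rw [hNum0, hN0]
    simpa using hsum_nonneg
  · rw [div_le_iff₀ (by exact_mod_cast hNpos)]
    refine hreal.trans ?_
    apply mul_le_mul_of_nonneg_right _ (Nat.cast_nonneg _)
    by_cases htm : t ≤ 2 * m
    · exact Finset.single_le_sum
        (f := fun s => ((2 * m).choose s : ℝ) * (2 * S.card / J.card : ℝ) ^ s)
        (fun i _ => by positivity) (mem_Icc.2 ⟨le_refl t, htm⟩)
    · have hc0 : (2 * m).choose t = 0 := Nat.choose_eq_zero_of_lt (lt_of_not_ge htm)
      rw [hc0]
      simpa using hsum_nonneg
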